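/- In the Metropolis-within-Gibbs setting, define ϱ := inf over f ∈ L²(X,π_X) with ∫_Θ var_{ξ(θ,·)}(f) π_Θ(dθ) > 0 of the ratio [∫_Θ var_{ξ(θ,·)}(f) Gap(Π_θ) π_Θ(dθ)] / [∫_Θ var_{ξ(θ,·)}(f) π_Θ(dθ)]. Then for every f ∈ L²(X,π_X) the Dirichlet forms satisfy 2 E_{Γ_x}(f) ≥ E_{Φ_x}(f) ≥ ϱ · E_{Γ_x}(f), and the right spectral gaps satisfy 2 Gap(Γ_x) ≥ Gap(Φ_x) ≥ ϱ · Gap(Γ_x). -/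

import Mathlib

open MeasureTheory ProbabilityTheory
open scoped ENNReal
open Set
set_option linter.unusedSectionVars false

/-- The Dirichlet form `E_K(f) = ∫ f (f - Kf) dμ` of a Markov transition `K`. -/
noncomputable def dform {α : Type*} [MeasurableSpace α]
    (μ : Measure α) (K : α → Measure α) (f : α → ℝ) : ℝ :=
  ∫ x, f x * (f x - ∫ y, f y ∂(K x)) ∂μ

/-- The variance of `f` under `μ`: `var_μ(f) = μ(f²) - μ(f)²`. -/
noncomputable def varF {α : Type*} [MeasurableSpace α] (μ : Measure α) (f : α → ℝ) : ℝ :=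
  (∫ x, f x ^ 2 ∂μ) - (∫ x, f x ∂μ) ^ 2

/-- The right spectral gap `Gap(K) = inf {E_K(f)/var_μ(f) : f ∈ L²(μ), var_μ(f) > 0}`. -/
noncomputable def gapR {α : Type*} [MeasurableSpace α]
    (μ : Measure α) (K : α → Measure α) : ℝ :=
  sInf {r : ℝ | ∃ f : α → ℝ, MemLp f 2 μ ∧ 0 < varF μ f ∧ r = dform μ K f / varF μ f}

variable {Θ X : Type*} [MeasurableSpace Θ] [MeasurableSpace X]

/-- The `X`-marginal Metropolis-within-Gibbs kernel
`Φ_x(x₀, S) = ∫_Θ Π_θ(x₀, S) η(x₀, dθ)`. -/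
noncomputable def PhiX (η : Kernel X Θ) (Pk : Kernel (Θ × X) X) (x₀ : X) : Measure X :=
  (η x₀).bind (fun θ => Pk (θ, x₀))

/-- The `X`-marginal Gibbs kernel `Γ_x(x₀, S) = ∫_Θ ξ(θ, S) η(x₀, dθ)`. -/
noncomputable def GammaX (η : Kernel X Θ) (ξ : Kernel Θ X) (x₀ : X) : Measure X :=
  (η x₀).bind (fun θ => ξ θ)

/-- The constant `ϱ`, an infimum over `f ∈ L²(X, π_X)` of the ratio
`∫ var_{ξ(θ,·)}(f) Gap(Π_θ) π_Θ(dθ) / ∫ var_{ξ(θ,·)}(f) π_Θ(dθ)`. -/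
noncomputable def mwgRho (π : Measure (Θ × X)) (ξ : Kernel Θ X)
    (Pk : Kernel (Θ × X) X) : ℝ :=
  sInf {r : ℝ | ∃ f : X → ℝ, MemLp f 2 π.snd ∧
    0 < (∫ θ, varF (ξ θ) f ∂π.fst) ∧
    r = (∫ θ, varF (ξ θ) f * gapR (ξ θ) (fun x => Pk (θ, x)) ∂π.fst) /
        (∫ θ, varF (ξ θ) f ∂π.fst)}

section PerTheta
variable {α : Type*} [MeasurableSpace α]
variable {μ : Measure α} [IsProbabilityMeasure μ] {κ : Kernel α α} [IsMarkovKernel κ]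
lemma sym_of_rev
    (hrev : ∀ A B : Set α, MeasurableSet A → MeasurableSet B →
      ∫⁻ x in A, κ x B ∂μ = ∫⁻ x in B, κ x A ∂μ) :
    (μ ⊗ₘ κ).map Prod.swap = μ ⊗ₘ κ := by
  refine ext_of_generate_finite _ generateFrom_prod.symm isPiSystem_prod ?_ ?_
  · rintro s ⟨A, hA, B, hB, rfl⟩
    rw [Measure.map_apply measurable_swap ((hA : MeasurableSet A).prod hB),
      Set.preimage_swap_prod, Measure.compProd_apply_prod hB hA,
      Measure.compProd_apply_prod hA hB, hrev A B hA hB]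
  · rw [Measure.map_apply measurable_swap MeasurableSet.univ]
    simp

variable (hs : (μ ⊗ₘ κ).map Prod.swap = μ ⊗ₘ κ)
include hs

lemma lint_swap {g : α × α → ℝ≥0∞} (hg : Measurable g) :
    ∫⁻ p, g p.swap ∂(μ ⊗ₘ κ) = ∫⁻ p, g p ∂(μ ⊗ₘ κ) := by
  conv_rhs => rw [← hs]
  rw [lintegral_map hg measurable_swap]

lemma lint_inv {g : α → ℝ≥0∞} (hg : Measurable g) :
    ∫⁻ x, ∫⁻ y, g y ∂κ x ∂μ = ∫⁻ x, g x ∂μ := by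
  have h1 : ∫⁻ p : α × α, g p.2 ∂(μ ⊗ₘ κ) = ∫⁻ x, ∫⁻ y, g y ∂κ x ∂μ :=
    Measure.lintegral_compProd (hg.comp measurable_snd)
  have h2 : ∫⁻ p : α × α, g p.2 ∂(μ ⊗ₘ κ) = ∫⁻ x, g x ∂μ := by
    have := lint_swap hs (g := fun p => g p.1) (hg.comp measurable_fst)
    simp only [Prod.fst_swap] at this
    rw [this, Measure.lintegral_compProd (f := fun p => g p.1) (hg.comp measurable_fst)]
    simp
  rw [← h1, h2]

lemma snd_eq : (μ ⊗ₘ κ).snd = μ := by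
  rw [← Measure.fst_map_swap, hs, Measure.fst_compProd]

lemma marg_fst {h : α → ℝ} (hm : StronglyMeasurable h)
    (h2 : Integrable (fun x => h x ^ 2) μ) :
    Integrable (fun p : α × α => h p.1 ^ 2) (μ ⊗ₘ κ) ∧
      ∫ p : α × α, h p.1 ^ 2 ∂(μ ⊗ₘ κ) = ∫ x, h x ^ 2 ∂μ := by
  have hfst : (μ ⊗ₘ κ).map Prod.fst = μ := Measure.fst_compProd μ κ
  have hint : Integrable (fun x => h x ^ 2) ((μ ⊗ₘ κ).map Prod.fst) := by rwa [hfst]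
  constructor
  · exact (integrable_map_measure (by rw [hfst]; exact (hm.pow 2).aestronglyMeasurable)
      measurable_fst.aemeasurable).1 hint
  · rw [← hfst, integral_map measurable_fst.aemeasurable]
    rw [hfst]; exact (hm.pow 2).aestronglyMeasurable

lemma marg_snd {h : α → ℝ} (hm : StronglyMeasurable h)
    (h2 : Integrable (fun x => h x ^ 2) μ) :
    Integrable (fun p : α × α => h p.2 ^ 2) (μ ⊗ₘ κ) ∧
      ∫ p : α × α, h p.2 ^ 2 ∂(μ ⊗ₘ κ) = ∫ x, h x ^ 2 ∂μ := by
  have hsnd : (μ ⊗ₘ κ).map Prod.snd = μ := snd_eq hs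
  have hint : Integrable (fun x => h x ^ 2) ((μ ⊗ₘ κ).map Prod.snd) := by rwa [hsnd]
  constructor
  · exact (integrable_map_measure (by rw [hsnd]; exact (hm.pow 2).aestronglyMeasurable)
      measurable_snd.aemeasurable).1 hint
  · rw [← hsnd, integral_map measurable_snd.aemeasurable]
    rw [hsnd]; exact (hm.pow 2).aestronglyMeasurable

lemma i_mul {h : α → ℝ} (hm : StronglyMeasurable h)
    (h2 : Integrable (fun x => h x ^ 2) μ) :
    Integrable (fun p : α × α => h p.1 * h p.2) (μ ⊗ₘ κ) := by
  refine Integrable.mono ((marg_fst hs hm h2).1.add (marg_snd hs hm h2).1)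
    ((hm.comp_measurable measurable_fst).mul
      (hm.comp_measurable measurable_snd)).aestronglyMeasurable
    (ae_of_all _ fun p => ?_)
  simp only [Pi.add_apply, Real.norm_eq_abs]
  rw [abs_of_nonneg (by positivity : (0:ℝ) ≤ h p.1 ^ 2 + h p.2 ^ 2), abs_mul]
  nlinarith [sq_nonneg (|h p.1| - |h p.2|), sq_abs (h p.1), sq_abs (h p.2),
    abs_nonneg (h p.1), abs_nonneg (h p.2)]


lemma dform_decomp {f : α → ℝ} (hfm : StronglyMeasurable f)
    (hf2 : Integrable (fun x => f x ^ 2) μ) :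
    Integrable (fun x => f x * ∫ y, f y ∂κ x) μ ∧
      dform μ (fun x => κ x) f
        = (∫ x, f x ^ 2 ∂μ) - ∫ x, f x * ∫ y, f y ∂κ x ∂μ := by
  have imul := i_mul hs hfm hf2
  have hKfm : StronglyMeasurable fun x => ∫ y, f y ∂κ x :=
    StronglyMeasurable.integral_kernel_prod_right' (κ := κ)
      (f := fun p : α × α => f p.2) (hfm.comp_measurable measurable_snd)
  have hcomp := (Measure.integrable_compProd_iff
    ((hfm.comp_measurable measurable_fst).mul
      (hfm.comp_measurable measurable_snd)).aestronglyMeasurable).1 imul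
  have iKf : Integrable (fun x => f x * ∫ y, f y ∂κ x) μ := by
    refine Integrable.mono' hcomp.2 (hfm.mul hKfm).aestronglyMeasurable
      (ae_of_all _ fun x => ?_)
    calc ‖f x * ∫ y, f y ∂κ x‖ = ‖f x‖ * ‖∫ y, f y ∂κ x‖ := norm_mul _ _
    _ ≤ ‖f x‖ * ∫ y, ‖f y‖ ∂κ x :=
        mul_le_mul_of_nonneg_left (norm_integral_le_integral_norm _) (norm_nonneg _)
    _ = ∫ y, ‖f x * f y‖ ∂κ x := by
        rw [← integral_const_mul]; congr 1; funext y; rw [norm_mul]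
  refine ⟨iKf, ?_⟩
  have h1 : (fun x => f x * (f x - ∫ y, f y ∂κ x))
      = fun x => f x ^ 2 - f x * ∫ y, f y ∂κ x := by funext x; ring
  rw [dform, h1, integral_sub hf2 iKf]

lemma dform_core {f : α → ℝ} (hfm : StronglyMeasurable f)
    (hf2 : Integrable (fun x => f x ^ 2) μ) :
    0 ≤ dform μ (fun x => κ x) f ∧ dform μ (fun x => κ x) f ≤ 2 * varF μ f := by
  have hfint : Integrable f μ :=
    ((memLp_two_iff_integrable_sq hfm.aestronglyMeasurable).2 hf2).integrable one_le_two
  have mf1 := marg_fst hs hfm hf2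
  have mf2 := marg_snd hs hfm hf2
  have imul := i_mul hs hfm hf2
  set m := μ ⊗ₘ κ with hm
  set I := ∫ p : α × α, f p.1 * f p.2 ∂m with hI
  -- Kf strongly measurable
  have hKfm : StronglyMeasurable fun x => ∫ y, f y ∂κ x :=
    StronglyMeasurable.integral_kernel_prod_right' (κ := κ)
      (f := fun p : α × α => f p.2) (hfm.comp_measurable measurable_snd)
  -- integrability of f * Kf
  have hcomp := (Measure.integrable_compProd_iff
    ((hfm.comp_measurable measurable_fst).mul
      (hfm.comp_measurable measurable_snd)).aestronglyMeasurable).1 imul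
  have iKf : Integrable (fun x => f x * ∫ y, f y ∂κ x) μ := by
    refine Integrable.mono' hcomp.2 (hfm.mul hKfm).aestronglyMeasurable
      (ae_of_all _ fun x => ?_)
    calc ‖f x * ∫ y, f y ∂κ x‖ = ‖f x‖ * ‖∫ y, f y ∂κ x‖ := norm_mul _ _
    _ ≤ ‖f x‖ * ∫ y, ‖f y‖ ∂κ x :=
        mul_le_mul_of_nonneg_left (norm_integral_le_integral_norm _) (norm_nonneg _)
    _ = ∫ y, ‖f x * f y‖ ∂κ x := by
        rw [← integral_const_mul]; congr 1; funext y; rw [norm_mul]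
  -- e1 : ∫ f·Kf = I
  have e1 : ∫ x, f x * ∫ y, f y ∂κ x ∂μ = I := by
    rw [hI, Measure.integral_compProd imul]
    congr 1; funext x
    exact (integral_const_mul (f x) f).symm ▸ (integral_const_mul (f x) f)
  -- dform = ∫ f² - I
  have dform_eq : dform μ (fun x => κ x) f = (∫ x, f x ^ 2 ∂μ) - I := by
    have h1 : (fun x => f x * (f x - ∫ y, f y ∂κ x))
        = fun x => f x ^ 2 - f x * ∫ y, f y ∂κ x := by funext x; ring
    rw [dform, h1, integral_sub hf2 iKf, e1]
  -- square difference identity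
  have sq_diff : ∫ p : α × α, (f p.1 - f p.2) ^ 2 ∂m
      = 2 * (∫ x, f x ^ 2 ∂μ) - 2 * I := by
    have h1 : (fun p : α × α => (f p.1 - f p.2) ^ 2)
        = fun p => f p.1 ^ 2 + f p.2 ^ 2 - 2 * (f p.1 * f p.2) := by funext p; ring
    have hadd : Integrable (fun p : α × α => f p.1 ^ 2 + f p.2 ^ 2) m := mf1.1.add mf2.1
    rw [h1, integral_sub hadd (imul.const_mul 2), integral_add mf1.1 mf2.1,
      integral_const_mul, mf1.2, mf2.2, ← hI]
    ring
  have hnn : 0 ≤ ∫ p : α × α, (f p.1 - f p.2) ^ 2 ∂m :=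
    integral_nonneg fun p => sq_nonneg _
  constructor
  · rw [dform_eq]; linarith [sq_diff ▸ hnn]
  · -- upper bound via centered function
    set c := ∫ x, f x ∂μ with hc
    set g : α → ℝ := fun x => f x - c with hg
    have hgm : StronglyMeasurable g := hfm.sub stronglyMeasurable_const
    have hg2 : Integrable (fun x => g x ^ 2) μ := by
      have : (fun x => g x ^ 2) = fun x => f x ^ 2 - (2 * c) * f x + c ^ 2 := by
        funext x; simp only [hg]; ring
      rw [this]
      exact (hf2.sub (hfint.const_mul (2 * c))).add (integrable_const _)
    have hgvar : ∫ x, g x ^ 2 ∂μ = varF μ f := by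
      have : (fun x => g x ^ 2) = fun x => f x ^ 2 - (2 * c) * f x + c ^ 2 := by
        funext x; simp only [hg]; ring
      have hsub : Integrable (fun x => f x ^ 2 - 2 * c * f x) μ :=
        hf2.sub (hfint.const_mul (2 * c))
      rw [this, integral_add hsub (integrable_const _),
        integral_sub hf2 (hfint.const_mul (2 * c)), integral_const_mul, integral_const]
      simp only [measure_univ, probReal_univ, ENNReal.toReal_one, smul_eq_mul, one_mul, varF, ← hc]
      ring
    have mg1 := marg_fst hs hgm hg2
    have mg2 := marg_snd hs hgm hg2
    have hbd : ∫ p : α × α, (f p.1 - f p.2) ^ 2 ∂m ≤ 4 * varF μ f := by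
      have heq : (fun p : α × α => (f p.1 - f p.2) ^ 2)
          = fun p => (g p.1 - g p.2) ^ 2 := by funext p; simp only [hg]; ring
      rw [heq]
      calc ∫ p : α × α, (g p.1 - g p.2) ^ 2 ∂m
          ≤ ∫ p : α × α, 2 * g p.1 ^ 2 + 2 * g p.2 ^ 2 ∂m := by
            have haddg : Integrable (fun p : α × α => 2 * g p.1 ^ 2 + 2 * g p.2 ^ 2) m :=
              (mg1.1.const_mul 2).add (mg2.1.const_mul 2)
            refine integral_mono_of_nonneg (ae_of_all _ fun p => sq_nonneg _)
              haddg (ae_of_all _ fun p => ?_)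
            dsimp only
            nlinarith [sq_nonneg (g p.1 + g p.2)]
      _ = 4 * varF μ f := by
            have haddg : Integrable (fun p : α × α => 2 * g p.1 ^ 2 + 2 * g p.2 ^ 2) m :=
              (mg1.1.const_mul 2).add (mg2.1.const_mul 2)
            rw [integral_add (mg1.1.const_mul 2) (mg2.1.const_mul 2),
              integral_const_mul, integral_const_mul, mg1.2, mg2.2, hgvar]
            ring
    rw [dform_eq]; linarith [sq_diff ▸ hbd]


lemma null_of_null {N : Set α} (hN : μ N = 0) : ∀ᵐ x ∂μ, κ x N = 0 := by
  set M := toMeasurable μ N with hM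
  have hMm : MeasurableSet M := measurableSet_toMeasurable μ N
  have hMn : μ M = 0 := by rwa [measure_toMeasurable]
  have key : ∫⁻ x, κ x M ∂μ = 0 := by
    have h1 : ∫⁻ x, κ x M ∂μ = (μ ⊗ₘ κ) (Set.univ ×ˢ M) := by
      rw [Measure.compProd_apply_prod MeasurableSet.univ hMm, setLIntegral_univ]
    have h2 : (μ ⊗ₘ κ) (Set.univ ×ˢ M) = (μ ⊗ₘ κ) (M ×ˢ Set.univ) := by
      conv_lhs => rw [← hs]
      rw [Measure.map_apply measurable_swap (MeasurableSet.univ.prod hMm),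
        Set.preimage_swap_prod]
    have h3 : (μ ⊗ₘ κ) (M ×ˢ Set.univ) = μ M := by
      rw [Measure.compProd_apply_prod hMm MeasurableSet.univ]
      simp [measure_univ]
    rw [h1, h2, h3, hMn]
  have := (lintegral_eq_zero_iff (κ.measurable_coe hMm)).1 key
  filter_upwards [this] with x hx
  have hx' : κ x M = 0 := hx
  exact le_antisymm (hx' ▸ measure_mono (subset_toMeasurable μ N)) zero_le

lemma ae_ae_of_ae {f g : α → ℝ} (hfg : f =ᵐ[μ] g) : ∀ᵐ x ∂μ, f =ᵐ[κ x] g := by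
  have : μ {x | ¬ f x = g x} = 0 := hfg
  filter_upwards [null_of_null hs this] with x hx
  exact hx

lemma dform_congr_ae {f g : α → ℝ} (hfg : f =ᵐ[μ] g) :
    dform μ (fun x => κ x) f = dform μ (fun x => κ x) g := by
  refine integral_congr_ae ?_
  filter_upwards [hfg, ae_ae_of_ae hs hfg] with x hx hx2
  rw [hx, integral_congr_ae hx2]

omit hs in
lemma varF_congr_ae {ν : Measure α} {f g : α → ℝ} (hfg : f =ᵐ[ν] g) :
    varF ν f = varF ν g := by
  unfold varF
  rw [integral_congr_ae hfg, integral_congr_ae (hfg.mono fun x hx => by rw [hx])]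

omit hs in
lemma varF_nonneg {f : α → ℝ} (hf : MemLp f 2 μ) : 0 ≤ varF μ f := by
  have h := variance_nonneg f μ
  rw [variance_eq_sub hf] at h
  simpa [varF] using h

/-- The two Dirichlet form inequalities for `MemLp` functions. -/
lemma dform_core' {f : α → ℝ} (hf : MemLp f 2 μ) :
    0 ≤ dform μ (fun x => κ x) f ∧ dform μ (fun x => κ x) f ≤ 2 * varF μ f := by
  obtain ⟨g, hgm, hfg⟩ := hf.aestronglyMeasurable
  have hgf : f =ᵐ[μ] g := hfg
  have hgℒ : MemLp g 2 μ := hf.ae_eq hgf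
  have hg2 : Integrable (fun x => g x ^ 2) μ :=
    (memLp_two_iff_integrable_sq hgm.aestronglyMeasurable).1 hgℒ
  have h := dform_core hs hgm hg2
  rw [dform_congr_ae hs hgf, varF_congr_ae hgf]
  exact h

lemma gapR_nonneg : 0 ≤ gapR μ (fun x => κ x) := by
  refine Real.sInf_nonneg fun r hr => ?_
  obtain ⟨f, hf, hv, rfl⟩ := hr
  exact div_nonneg (dform_core' hs hf).1 hv.le

lemma gapR_bddBelow :
    BddBelow {r : ℝ | ∃ f : α → ℝ, MemLp f 2 μ ∧ 0 < varF μ f ∧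
      r = dform μ (fun x => κ x) f / varF μ f} := by
  refine ⟨0, fun r hr => ?_⟩
  obtain ⟨f, hf, hv, rfl⟩ := hr
  exact div_nonneg (dform_core' hs hf).1 hv.le

lemma gapR_mul_var_le {f : α → ℝ} (hf : MemLp f 2 μ) :
    gapR μ (fun x => κ x) * varF μ f ≤ dform μ (fun x => κ x) f := by
  rcases eq_or_lt_of_le (varF_nonneg hf) with h | h
  · rw [← h, mul_zero]; exact (dform_core' hs hf).1
  · have hmem : dform μ (fun x => κ x) f / varF μ f ∈
        {r : ℝ | ∃ f : α → ℝ, MemLp f 2 μ ∧ 0 < varF μ f ∧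
          r = dform μ (fun x => κ x) f / varF μ f} := ⟨f, hf, h, rfl⟩
    have := csInf_le (gapR_bddBelow hs) hmem
    rw [gapR]
    exact (le_div_iff₀ h).1 this

end PerTheta

lemma dform_const {α : Type*} [MeasurableSpace α] {ν : Measure α} [IsProbabilityMeasure ν]
    {g : α → ℝ} (hg2 : Integrable (fun x => g x ^ 2) ν) (hgi : Integrable g ν) :
    dform ν (fun _ => ν) g = varF ν g := by
  have h1 : (fun x => g x * (g x - ∫ y, g y ∂ν))
      = fun x => g x ^ 2 - (∫ y, g y ∂ν) * g x := by funext x; ring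
  rw [dform, varF, h1, integral_sub hg2 (hgi.const_mul _), integral_const_mul]
  ring

section Glue
variable {π : Measure (Θ × X)} [IsProbabilityMeasure π]
variable {ξ : Kernel Θ X} [IsMarkovKernel ξ] {η : Kernel X Θ} [IsMarkovKernel η]
variable {μΘ : Measure Θ} [IsProbabilityMeasure μΘ] {μX : Measure X} [IsProbabilityMeasure μX]
variable {Pk : Kernel (Θ × X) X} [IsMarkovKernel Pk]

lemma my_integral_bind {β γ : Type*} [MeasurableSpace β] [MeasurableSpace γ]
    (ν : Measure β) [SFinite ν] (κ : Kernel β γ) [IsMarkovKernel κ] {g : γ → ℝ}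
    (hgsm : StronglyMeasurable g) (hgi : Integrable g (ν.bind fun b => κ b)) :
    ∫ y, g y ∂(ν.bind fun b => κ b) = ∫ b, ∫ y, g y ∂κ b ∂ν := by
  have hbind : ν.bind (fun b => κ b) = (ν ⊗ₘ κ).map Prod.snd := by
    ext s hs
    rw [Measure.bind_apply hs κ.measurable.aemeasurable, Measure.map_apply measurable_snd hs,
      show Prod.snd ⁻¹' s = (Set.univ : Set β) ×ˢ s from by ext p; simp,
      Measure.compProd_apply_prod MeasurableSet.univ hs, setLIntegral_univ]
  have hint : Integrable (fun p : β × γ => g p.2) (ν ⊗ₘ κ) := by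
    rw [hbind] at hgi
    exact (integrable_map_measure hgsm.aestronglyMeasurable
      measurable_snd.aemeasurable).1 hgi
  rw [hbind, integral_map measurable_snd.aemeasurable hgsm.aestronglyMeasurable,
    Measure.integral_compProd hint]

lemma my_lintegral_bind {β γ : Type*} [MeasurableSpace β] [MeasurableSpace γ]
    (ν : Measure β) (κ : Kernel β γ) {g : γ → ℝ≥0∞} (hg : Measurable g) :
    ∫⁻ y, g y ∂(ν.bind fun b => κ b) = ∫⁻ b, ∫⁻ y, g y ∂κ b ∂ν :=
  Measure.lintegral_bind κ.measurable.aemeasurable hg.aemeasurable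

lemma bind_prob (x : X) : IsProbabilityMeasure ((η x).bind fun θ => Pk (θ, x)) := by
  constructor
  have hb : ((η x).bind fun θ => Pk (θ, x)) Set.univ = ∫⁻ θ, Pk (θ, x) Set.univ ∂η x :=
    Measure.bind_apply (f := fun θ => Pk (θ, x)) MeasurableSet.univ
      (Pk.measurable.comp measurable_prodMk_right).aemeasurable
  rw [hb]
  simp

variable (h1 : π = μΘ ⊗ₘ ξ) (h2 : π = (μX ⊗ₘ η).map Prod.swap)
include h1 h2

lemma pi_snd : π.map Prod.snd = μX := by
  have : π.snd = μX := by rw [h2, Measure.snd_map_swap, Measure.fst_compProd]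
  exact this

lemma pi_fst : π.map Prod.fst = μΘ := by
  have : π.fst = μΘ := by rw [h1, Measure.fst_compProd]
  exact this

lemma L1 {G : Θ × X → ℝ≥0∞} (hG : Measurable G) :
    ∫⁻ q, G q ∂π = ∫⁻ θ, ∫⁻ x, G (θ, x) ∂ξ θ ∂μΘ := by
  conv_lhs => rw [h1]
  exact Measure.lintegral_compProd hG

lemma L2 {G : Θ × X → ℝ≥0∞} (hG : Measurable G) :
    ∫⁻ q, G q ∂π = ∫⁻ x, ∫⁻ θ, G (θ, x) ∂η x ∂μX := by
  conv_lhs => rw [h2]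
  rw [lintegral_map hG measurable_swap,
    Measure.lintegral_compProd (f := fun p => G p.swap) (hG.comp measurable_swap)]
  rfl

lemma Lsnd {h : X → ℝ≥0∞} (mh : Measurable h) :
    ∫⁻ θ, ∫⁻ x, h x ∂ξ θ ∂μΘ = ∫⁻ x, h x ∂μX := by
  rw [← L1 h1 h2 (G := fun q => h q.2) (mh.comp measurable_snd), ← pi_snd h1 h2,
    lintegral_map mh measurable_snd]

lemma measX {N : Set X} (hN : MeasurableSet N) : μX N = ∫⁻ θ, ξ θ N ∂μΘ := by
  have h3 : Prod.snd ⁻¹' N = (Set.univ : Set Θ) ×ˢ N := by ext p; simp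
  rw [← pi_snd h1 h2, Measure.map_apply measurable_snd hN, h3]
  conv_lhs => rw [h1]
  rw [Measure.compProd_apply_prod MeasurableSet.univ hN, setLIntegral_univ]


lemma slice_null {N : Set X} (hN : μX N = 0) : ∀ᵐ θ ∂μΘ, ξ θ N = 0 := by
  set M := toMeasurable μX N with hM
  have hMm : MeasurableSet M := measurableSet_toMeasurable μX N
  have hMn : μX M = 0 := by rwa [measure_toMeasurable]
  have key : ∫⁻ θ, ξ θ M ∂μΘ = 0 := by rw [← measX h1 h2 hMm, hMn]
  have := (lintegral_eq_zero_iff (ξ.measurable_coe hMm)).1 key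
  filter_upwards [this] with θ hθ
  have hθ' : ξ θ M = 0 := hθ
  exact le_antisymm (hθ' ▸ measure_mono (subset_toMeasurable μX N)) zero_le

lemma slice_ae {f g : X → ℝ} (hfg : f =ᵐ[μX] g) : ∀ᵐ θ ∂μΘ, f =ᵐ[ξ θ] g := by
  have hnull : μX {x | ¬ f x = g x} = 0 := hfg
  filter_upwards [slice_null h1 h2 hnull] with θ hθ
  exact ae_iff.2 hθ

lemma slice_sq {g : X → ℝ} (hgm : StronglyMeasurable g)
    (hg2 : Integrable (fun x => g x ^ 2) μX) :
    ∀ᵐ θ ∂μΘ, Integrable (fun x => g x ^ 2) (ξ θ) := by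
  have hg2sm : StronglyMeasurable fun x => g x ^ 2 :=
    (hgm.measurable.pow_const 2).stronglyMeasurable
  have hg2m : Measurable fun y => (‖g y ^ 2‖₊ : ℝ≥0∞) :=
    (hgm.measurable.pow_const 2).enorm
  have hfin : ∫⁻ θ, ∫⁻ x, (‖g x ^ 2‖₊ : ℝ≥0∞) ∂ξ θ ∂μΘ < ∞ := by
    rw [Lsnd h1 h2 hg2m]; exact hg2.2
  have hm : Measurable fun θ => ∫⁻ x, (‖g x ^ 2‖₊ : ℝ≥0∞) ∂ξ θ :=
    Measurable.lintegral_kernel (κ := ξ) hg2m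
  filter_upwards [ae_lt_top hm hfin.ne] with θ hθ
  exact ⟨hg2sm.aestronglyMeasurable, hθ⟩

lemma slice_memLp {f : X → ℝ} (hf : MemLp f 2 μX) : ∀ᵐ θ ∂μΘ, MemLp f 2 (ξ θ) := by
  obtain ⟨g, hgm, hfg⟩ := hf.aestronglyMeasurable
  have hfg' : f =ᵐ[μX] g := hfg
  have hgmem : MemLp g 2 μX := hf.ae_eq hfg'
  have hg2 : Integrable (fun x => g x ^ 2) μX :=
    (memLp_two_iff_integrable_sq hgm.aestronglyMeasurable).1 hgmem
  filter_upwards [slice_sq h1 h2 hgm hg2, slice_ae h1 h2 hfg'] with θ hθ hae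
  exact ((memLp_two_iff_integrable_sq hgm.aestronglyMeasurable).2 hθ).ae_eq hae.symm

omit h1 h2 in
lemma kth_eq (θ : Θ) :
    (fun x => (Pk.comap (Prod.mk θ) measurable_prodMk_left) x) = fun x => Pk (θ, x) :=
  funext fun x => Kernel.comap_apply _ _ _

variable (hrev : ∀ θ : Θ, ∀ A B : Set X, MeasurableSet A → MeasurableSet B →
      ∫⁻ x in A, Pk (θ, x) B ∂(ξ θ) = ∫⁻ x in B, Pk (θ, x) A ∂(ξ θ))
include hrev

omit h1 h2 in
lemma hs_theta (θ : Θ) :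
    ((ξ θ) ⊗ₘ (Pk.comap (Prod.mk θ) measurable_prodMk_left)).map Prod.swap
      = (ξ θ) ⊗ₘ (Pk.comap (Prod.mk θ) measurable_prodMk_left) := by
  refine sym_of_rev fun A B hA hB => ?_
  simpa [Kernel.comap_apply] using hrev θ A B hA hB

lemma phi_null {N : Set X} (hN : μX N = 0) :
    ∀ᵐ x ∂μX, ((η x).bind fun θ => Pk (θ, x)) N = 0 := by
  set M := toMeasurable μX N with hM
  have hMm : MeasurableSet M := measurableSet_toMeasurable μX N
  have hMn : μX M = 0 := by rwa [measure_toMeasurable]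
  have hbap : ∀ x, ((η x).bind fun θ => Pk (θ, x)) M = ∫⁻ θ, Pk (θ, x) M ∂η x := fun x =>
    Measure.bind_apply (f := fun θ => Pk (θ, x)) hMm
      (Pk.measurable.comp measurable_prodMk_right).aemeasurable
  have hmeas : Measurable fun x => ∫⁻ θ, Pk (θ, x) M ∂η x :=
    Measurable.lintegral_kernel_prod_right' (κ := η)
      (f := fun p : X × Θ => Pk (p.2, p.1) M)
      ((Pk.measurable_coe hMm).comp measurable_swap)
  have key : ∫⁻ x, ∫⁻ θ, Pk (θ, x) M ∂η x ∂μX = 0 := by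
    rw [← L2 h1 h2 (G := fun q => Pk q M) (Pk.measurable_coe hMm),
      L1 h1 h2 (Pk.measurable_coe hMm)]
    have hin : ∀ θ, ∫⁻ x, Pk (θ, x) M ∂ξ θ = ξ θ M := fun θ => by
      have := hrev θ Set.univ M MeasurableSet.univ hMm
      rw [setLIntegral_univ] at this
      rw [this]
      simp [measure_univ]
    rw [lintegral_congr hin, ← measX h1 h2 hMm, hMn]
  have := (lintegral_eq_zero_iff hmeas).1 key
  filter_upwards [this] with x hx
  have hx' : ∫⁻ θ, Pk (θ, x) M ∂η x = 0 := hx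
  have : ((η x).bind fun θ => Pk (θ, x)) M = 0 := by rw [hbap x, hx']
  exact le_antisymm (this ▸ measure_mono (subset_toMeasurable μX N)) zero_le

lemma dform_congr_bind {f g : X → ℝ} (hfg : f =ᵐ[μX] g) :
    dform μX (fun x => (η x).bind fun θ => Pk (θ, x)) f
      = dform μX (fun x => (η x).bind fun θ => Pk (θ, x)) g := by
  refine integral_congr_ae ?_
  have hnull : μX {x | ¬ f x = g x} = 0 := hfg
  filter_upwards [hfg, phi_null h1 h2 hrev hnull] with x hx hx2
  rw [hx, integral_congr_ae (ae_iff.2 hx2)]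

lemma glue {g : X → ℝ} (hgm : StronglyMeasurable g)
    (hg2 : Integrable (fun x => g x ^ 2) μX) :
    Integrable (fun θ => dform (ξ θ) (fun x => Pk (θ, x)) g) μΘ ∧
    dform μX (fun x => (η x).bind fun θ => Pk (θ, x)) g
      = ∫ θ, dform (ξ θ) (fun x => Pk (θ, x)) g ∂μΘ := by
  have hg2sm : StronglyMeasurable fun x => g x ^ 2 :=
    (hgm.measurable.pow_const 2).stronglyMeasurable
  have hg2m : Measurable fun y => (‖g y ^ 2‖₊ : ℝ≥0∞) :=
    (hgm.measurable.pow_const 2).enorm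
  set Kg : Θ × X → ℝ := fun q => ∫ y, g y ∂Pk q with hKgdef
  have hKgm : StronglyMeasurable Kg :=
    StronglyMeasurable.integral_kernel_prod_right' (κ := Pk)
      (f := fun p : (Θ × X) × X => g p.2) (hgm.comp_measurable measurable_snd)
  have hg2n : ∫⁻ x, ‖g x ^ 2‖₊ ∂μX < ∞ := hg2.2
  have hψm : Measurable fun q => ∫⁻ y, (‖g y ^ 2‖₊ : ℝ≥0∞) ∂Pk q :=
    Measurable.lintegral_kernel (κ := Pk) hg2m
  have hinner : ∀ θ, ∫⁻ x, (∫⁻ y, (‖g y ^ 2‖₊ : ℝ≥0∞) ∂Pk (θ, x)) ∂ξ θ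
      = ∫⁻ x, (‖g x ^ 2‖₊ : ℝ≥0∞) ∂ξ θ := fun θ => by
    have := lint_inv (hs_theta hrev θ) hg2m
    simpa [Kernel.comap_apply] using this
  have hψfin : ∫⁻ q, (∫⁻ y, (‖g y ^ 2‖₊ : ℝ≥0∞) ∂Pk q) ∂π < ∞ := by
    rw [L1 h1 h2 hψm]
    calc ∫⁻ θ, ∫⁻ x, (∫⁻ y, (‖g y ^ 2‖₊ : ℝ≥0∞) ∂Pk (θ, x)) ∂ξ θ ∂μΘ
        = ∫⁻ θ, ∫⁻ x, (‖g x ^ 2‖₊ : ℝ≥0∞) ∂ξ θ ∂μΘ := lintegral_congr fun θ => hinner θ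
      _ = ∫⁻ x, (‖g x ^ 2‖₊ : ℝ≥0∞) ∂μX := Lsnd h1 h2 hg2m
      _ < ∞ := hg2n
  have haeq : ∀ᵐ q ∂π, Integrable (fun y => g y ^ 2) (Pk q) := by
    filter_upwards [ae_lt_top hψm hψfin.ne] with q hq
    exact ⟨hg2sm.aestronglyMeasurable, hq⟩
  set Vg : Θ × X → ℝ := fun q => ∫ y, g y ^ 2 ∂Pk q with hVgdef
  have hVgm : StronglyMeasurable Vg :=
    StronglyMeasurable.integral_kernel_prod_right' (κ := Pk)
      (f := fun p : (Θ × X) × X => g p.2 ^ 2) (hg2sm.comp_measurable measurable_snd)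
  have hVgi : Integrable Vg π := by
    refine ⟨hVgm.aestronglyMeasurable, ?_⟩
    refine lt_of_le_of_lt (lintegral_mono fun q => ?_) hψfin
    exact enorm_integral_le_lintegral_enorm _
  have hJen : ∀ᵐ q ∂π, Kg q ^ 2 ≤ Vg q := by
    filter_upwards [haeq] with q hq
    have hmem : MemLp g 2 (Pk q) :=
      (memLp_two_iff_integrable_sq hgm.aestronglyMeasurable).2 hq
    have hv := varF_nonneg hmem
    rw [varF] at hv
    simp only [hKgdef, hVgdef]
    linarith
  -- integrability of q ↦ g q.2 ^ 2 over π
  have hsnd_eq : π.map Prod.snd = μX := pi_snd h1 h2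
  have hsndm : Integrable (fun q : Θ × X => g q.2 ^ 2) π := by
    have h := hg2
    rw [← hsnd_eq] at h
    exact (integrable_map_measure hg2sm.aestronglyMeasurable
      measurable_snd.aemeasurable).1 h
  have hsq_snd : ∫ q, g q.2 ^ 2 ∂π = ∫ x, g x ^ 2 ∂μX := by
    rw [← hsnd_eq, integral_map measurable_snd.aemeasurable hg2sm.aestronglyMeasurable]
  -- G₂ integrable
  have hG2sm : StronglyMeasurable fun q : Θ × X => g q.2 * Kg q :=
    (hgm.comp_measurable measurable_snd).mul hKgm
  have hG2i : Integrable (fun q : Θ × X => g q.2 * Kg q) π := by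
    have hbd : Integrable (fun q : Θ × X => (g q.2 ^ 2 + Vg q) / 2) π :=
      (hsndm.add hVgi).div_const 2
    refine Integrable.mono' hbd hG2sm.aestronglyMeasurable ?_
    filter_upwards [hJen] with q hq
    rw [Real.norm_eq_abs, abs_mul]
    nlinarith [sq_nonneg (|g q.2| - |Kg q|), sq_abs (g q.2), sq_abs (Kg q),
      abs_nonneg (g q.2), abs_nonneg (Kg q)]
  -- F1 direction
  have hG2c : Integrable (fun q : Θ × X => g q.2 * Kg q) (μΘ ⊗ₘ ξ) := by
    rw [← h1]; exact hG2i
  have hA : ∫ q, g q.2 * Kg q ∂π = ∫ θ, ∫ x, g x * Kg (θ, x) ∂ξ θ ∂μΘ := by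
    conv_lhs => rw [h1]
    exact Measure.integral_compProd hG2c
  have hAsm : StronglyMeasurable fun θ => ∫ x, g x * Kg (θ, x) ∂ξ θ :=
    StronglyMeasurable.integral_kernel_prod_right' (κ := ξ)
      (f := fun q : Θ × X => g q.2 * Kg q) hG2sm
  have hAint : Integrable (fun θ => ∫ x, g x * Kg (θ, x) ∂ξ θ) μΘ := by
    have hcomp := (Measure.integrable_compProd_iff hG2sm.aestronglyMeasurable).1 hG2c
    refine Integrable.mono' hcomp.2 hAsm.aestronglyMeasurable (ae_of_all _ fun θ => ?_)
    exact norm_integral_le_integral_norm _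
  -- same for g².2
  have hBc : Integrable (fun q : Θ × X => g q.2 ^ 2) (μΘ ⊗ₘ ξ) := by
    rw [← h1]; exact hsndm
  have hB : ∫ q, g q.2 ^ 2 ∂π = ∫ θ, ∫ x, g x ^ 2 ∂ξ θ ∂μΘ := by
    conv_lhs => rw [h1]
    exact Measure.integral_compProd hBc
  have hBsm : StronglyMeasurable fun θ => ∫ x, g x ^ 2 ∂ξ θ :=
    StronglyMeasurable.integral_kernel_prod_right' (κ := ξ)
      (f := fun q : Θ × X => g q.2 ^ 2) (hg2sm.comp_measurable measurable_snd)
  have hBint : Integrable (fun θ => ∫ x, g x ^ 2 ∂ξ θ) μΘ := by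
    have hcomp := (Measure.integrable_compProd_iff
      (hg2sm.comp_measurable measurable_snd).aestronglyMeasurable).1 hBc
    refine Integrable.mono' hcomp.2 hBsm.aestronglyMeasurable (ae_of_all _ fun θ => ?_)
    exact norm_integral_le_integral_norm _
  -- per-θ integrability of g²
  have haeθ2 : ∀ᵐ θ ∂μΘ, Integrable (fun x => g x ^ 2) (ξ θ) := by
    have hfin : ∫⁻ θ, ∫⁻ x, (‖g x ^ 2‖₊ : ℝ≥0∞) ∂ξ θ ∂μΘ < ∞ := by
      rw [Lsnd h1 h2 hg2m]; exact hg2n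
    have hm : Measurable fun θ => ∫⁻ x, (‖g x ^ 2‖₊ : ℝ≥0∞) ∂ξ θ :=
      Measurable.lintegral_kernel (κ := ξ) hg2m
    filter_upwards [ae_lt_top hm hfin.ne] with θ hθ
    exact ⟨hg2sm.aestronglyMeasurable, hθ⟩
  -- per-θ decomposition
  have hdθ : ∀ᵐ θ ∂μΘ, dform (ξ θ) (fun x => Pk (θ, x)) g
      = (∫ x, g x ^ 2 ∂ξ θ) - ∫ x, g x * Kg (θ, x) ∂ξ θ := by
    filter_upwards [haeθ2] with θ hθ
    have hd := (dform_decomp (hs_theta hrev θ) hgm hθ).2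
    rw [kth_eq (Pk := Pk) θ] at hd
    simpa [Kernel.comap_apply, hKgdef] using hd
  have hInt : Integrable (fun θ => dform (ξ θ) (fun x => Pk (θ, x)) g) μΘ :=
    (hBint.sub hAint).congr (hdθ.mono fun θ hθ => hθ.symm)
  refine ⟨hInt, ?_⟩
  -- LHS computation
  have hη2 : Integrable (fun p : X × Θ => g p.1 * Kg (p.2, p.1)) (μX ⊗ₘ η) := by
    have h := hG2i
    rw [h2] at h
    exact (integrable_map_measure hG2sm.aestronglyMeasurable
      measurable_swap.aemeasurable).1 h
  have hC : ∫ q, g q.2 * Kg q ∂π = ∫ x, ∫ θ, g x * Kg (θ, x) ∂η x ∂μX := by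
    conv_lhs => rw [h2]
    rw [integral_map measurable_swap.aemeasurable hG2sm.aestronglyMeasurable]
    exact Measure.integral_compProd (f := fun p : X × Θ => g p.1 * Kg (p.2, p.1)) hη2
  have hWsm : StronglyMeasurable fun x => ∫ θ, g x * Kg (θ, x) ∂η x :=
    StronglyMeasurable.integral_kernel_prod_right' (κ := η)
      (f := fun p : X × Θ => g p.1 * Kg (p.2, p.1))
      ((hgm.comp_measurable measurable_fst).mul
        (hKgm.comp_measurable (measurable_snd.prodMk measurable_fst)))
  have hWi : Integrable (fun x => ∫ θ, g x * Kg (θ, x) ∂η x) μX := by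
    have hcomp := (Measure.integrable_compProd_iff
      ((hgm.comp_measurable measurable_fst).mul
        (hKgm.comp_measurable (measurable_snd.prodMk measurable_fst))).aestronglyMeasurable).1 hη2
    refine Integrable.mono' hcomp.2 hWsm.aestronglyMeasurable (ae_of_all _ fun x => ?_)
    exact norm_integral_le_integral_norm _
  -- a.e. x : finiteness of the second moment of the bound measure
  have haex2 : ∀ᵐ x ∂μX, ∫⁻ θ, (∫⁻ y, (‖g y ^ 2‖₊ : ℝ≥0∞) ∂Pk (θ, x)) ∂η x < ∞ := by
    have heq : ∫⁻ x, ∫⁻ θ, (∫⁻ y, (‖g y ^ 2‖₊ : ℝ≥0∞) ∂Pk (θ, x)) ∂η x ∂μX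
        = ∫⁻ q, (∫⁻ y, (‖g y ^ 2‖₊ : ℝ≥0∞) ∂Pk q) ∂π := (L2 h1 h2 hψm).symm
    have hm : Measurable fun x => ∫⁻ θ, (∫⁻ y, (‖g y ^ 2‖₊ : ℝ≥0∞) ∂Pk (θ, x)) ∂η x :=
      Measurable.lintegral_kernel_prod_right' (κ := η)
        (f := fun p : X × Θ => ∫⁻ y, (‖g y ^ 2‖₊ : ℝ≥0∞) ∂Pk (p.2, p.1))
        (hψm.comp measurable_swap)
    refine ae_lt_top hm ?_
    rw [heq]; exact hψfin.ne
  have haeg : ∀ᵐ x ∂μX, (∫ y, g y ∂((η x).bind fun θ => Pk (θ, x)))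
      = ∫ θ, Kg (θ, x) ∂η x := by
    filter_upwards [haex2] with x hx
    have hprob : IsProbabilityMeasure ((η x).bind fun θ => Pk (θ, x)) := bind_prob x
    -- second moment finite for the bind measure
    have hl : ∫⁻ y, (‖g y ^ 2‖₊ : ℝ≥0∞) ∂((η x).bind fun θ => Pk (θ, x))
        = ∫⁻ θ, (∫⁻ y, (‖g y ^ 2‖₊ : ℝ≥0∞) ∂Pk (θ, x)) ∂η x := by
      have := my_lintegral_bind (η x) (Pk.comap (fun θ => (θ, x)) measurable_prodMk_right) hg2m
      simpa [Kernel.comap_apply] using this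
    have hint2 : Integrable (fun y => g y ^ 2) ((η x).bind fun θ => Pk (θ, x)) :=
      ⟨hg2sm.aestronglyMeasurable,
        show (∫⁻ y, (‖g y ^ 2‖₊ : ℝ≥0∞) ∂((η x).bind fun θ => Pk (θ, x))) < ⊤ by
          rw [hl]; exact hx⟩
    have hmem : MemLp g 2 ((η x).bind fun θ => Pk (θ, x)) :=
      (memLp_two_iff_integrable_sq hgm.aestronglyMeasurable).2 hint2
    have hgi : Integrable g ((η x).bind fun θ => Pk (θ, x)) := hmem.integrable one_le_two
    have := my_integral_bind (η x) (Pk.comap (fun θ => (θ, x)) measurable_prodMk_right)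
      hgm (by simpa [Kernel.comap_apply] using hgi)
    simpa [Kernel.comap_apply, hKgdef] using this
  -- assemble LHS
  have hLHS : dform μX (fun x => (η x).bind fun θ => Pk (θ, x)) g
      = (∫ x, g x ^ 2 ∂μX) - ∫ q, g q.2 * Kg q ∂π := by
    have hpt : ∀ᵐ x ∂μX, g x * (g x - ∫ y, g y ∂((η x).bind fun θ => Pk (θ, x)))
        = g x ^ 2 - ∫ θ, g x * Kg (θ, x) ∂η x := by
      filter_upwards [haeg] with x hx
      rw [hx, integral_const_mul]
      ring
    rw [dform, integral_congr_ae hpt, integral_sub hg2 hWi, hC]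
  rw [hLHS, integral_congr_ae hdθ, integral_sub hBint hAint, ← hA, ← hB, hsq_snd]

end Glue

/-- In the Metropolis-within-Gibbs setting, for every `f ∈ L²(X, π_X)` the Dirichlet forms
satisfy `2 E_{Γ_x}(f) ≥ E_{Φ_x}(f) ≥ ϱ E_{Γ_x}(f)` and the right spectral gaps satisfy
`2 Gap(Γ_x) ≥ Gap(Φ_x) ≥ ϱ Gap(Γ_x)`. -/
theorem mwg_dirichlet_and_gap_comparison
    (π : Measure (Θ × X)) [IsProbabilityMeasure π]
    (ξ : Kernel Θ X) [IsMarkovKernel ξ] (η : Kernel X Θ) [IsMarkovKernel η]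
    (hdis₁ : π = Measure.compProd π.fst ξ)
    (hdis₂ : π = (Measure.compProd π.snd η).map Prod.swap)
    (Pk : Kernel (Θ × X) X) [IsMarkovKernel Pk]
    (hrev : ∀ θ : Θ, ∀ A B : Set X, MeasurableSet A → MeasurableSet B →
      ∫⁻ x in A, Pk (θ, x) B ∂(ξ θ) = ∫⁻ x in B, Pk (θ, x) A ∂(ξ θ)) :
    (∀ f : X → ℝ, MemLp f 2 π.snd →
      dform π.snd (PhiX η Pk) f ≤ 2 * dform π.snd (GammaX η ξ) f ∧
      mwgRho π ξ Pk * dform π.snd (GammaX η ξ) f ≤ dform π.snd (PhiX η Pk) f) ∧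
    (gapR π.snd (PhiX η Pk) ≤ 2 * gapR π.snd (GammaX η ξ) ∧
      mwgRho π ξ Pk * gapR π.snd (GammaX η ξ) ≤ gapR π.snd (PhiX η Pk)) := by
  set μΘ := π.fst with hμΘ
  set μX := π.snd with hμX
  have h1 : π = μΘ ⊗ₘ ξ := hdis₁
  have h2 : π = (μX ⊗ₘ η).map Prod.swap := hdis₂
  set κΓ : Kernel (Θ × X) X := ξ.comap Prod.fst measurable_fst with hκΓ
  haveI : IsMarkovKernel κΓ := by rw [hκΓ]; infer_instance
  have hrevΓ : ∀ θ : Θ, ∀ A B : Set X, MeasurableSet A → MeasurableSet B →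
      ∫⁻ x in A, κΓ (θ, x) B ∂(ξ θ) = ∫⁻ x in B, κΓ (θ, x) A ∂(ξ θ) := by
    intro θ A B hA hB
    simp only [hκΓ, Kernel.comap_apply]
    rw [setLIntegral_const, setLIntegral_const, mul_comm]
  have hgamma_eq : (fun x => (η x).bind fun θ => κΓ (θ, x)) = GammaX η ξ := by
    funext x
    simp only [GammaX, hκΓ, Kernel.comap_apply]
  have hphi_eq : (fun x => (η x).bind fun θ => Pk (θ, x)) = PhiX η Pk := rfl
  set Sρ := {r : ℝ | ∃ f : X → ℝ, MemLp f 2 μX ∧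
      0 < (∫ θ, varF (ξ θ) f ∂μΘ) ∧
      r = (∫ θ, varF (ξ θ) f * gapR (ξ θ) (fun x => Pk (θ, x)) ∂μΘ) /
          (∫ θ, varF (ξ θ) f ∂μΘ)} with hSρ
  have hρ : mwgRho π ξ Pk = sInf Sρ := rfl
  have hgapnn : ∀ θ, 0 ≤ gapR (ξ θ) (fun x => Pk (θ, x)) := fun θ => by
    have h := gapR_nonneg (hs_theta hrev θ)
    rwa [kth_eq] at h
  have hρel : ∀ r ∈ Sρ, (0:ℝ) ≤ r := by
    rintro r ⟨f, hf, hpos, rfl⟩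
    refine div_nonneg (integral_nonneg_of_ae ?_) hpos.le
    filter_upwards [slice_memLp h1 h2 hf] with θ hθ
    exact mul_nonneg (varF_nonneg hθ) (hgapnn θ)
  have hbddρ : BddBelow Sρ := ⟨0, fun r hr => hρel r hr⟩
  have hρnn : 0 ≤ mwgRho π ξ Pk := by
    rw [hρ]; exact Real.sInf_nonneg hρel
  have key : ∀ f : X → ℝ, MemLp f 2 μX →
      (0 ≤ dform μX (PhiX η Pk) f ∧ 0 ≤ dform μX (GammaX η ξ) f) ∧
      dform μX (PhiX η Pk) f ≤ 2 * dform μX (GammaX η ξ) f ∧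
      mwgRho π ξ Pk * dform μX (GammaX η ξ) f ≤ dform μX (PhiX η Pk) f := by
    intro f hf
    obtain ⟨g, hgm, hfg0⟩ := hf.aestronglyMeasurable
    have hfg : f =ᵐ[μX] g := hfg0
    have hgmem : MemLp g 2 μX := hf.ae_eq hfg
    have hg2 : Integrable (fun x => g x ^ 2) μX :=
      (memLp_two_iff_integrable_sq hgm.aestronglyMeasurable).1 hgmem
    have tΦ : dform μX (PhiX η Pk) f = dform μX (PhiX η Pk) g := by
      rw [← hphi_eq]; exact dform_congr_bind h1 h2 hrev hfg
    have tΓ : dform μX (GammaX η ξ) f = dform μX (GammaX η ξ) g := by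
      rw [← hgamma_eq]; exact dform_congr_bind h1 h2 hrevΓ hfg
    have gΦ := glue h1 h2 hrev hgm hg2
    have gΓ := glue h1 h2 hrevΓ hgm hg2
    have haeθ2 := slice_sq h1 h2 hgm hg2
    have hΓθ : ∀ᵐ θ ∂μΘ, dform (ξ θ) (fun x => κΓ (θ, x)) g = varF (ξ θ) g := by
      filter_upwards [haeθ2] with θ hθ
      have h' : (fun x => κΓ (θ, x)) = fun _ => ξ θ := by
        funext x; simp only [hκΓ, Kernel.comap_apply]
      rw [h']
      have hmem := (memLp_two_iff_integrable_sq hgm.aestronglyMeasurable).2 hθ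
      exact dform_const hθ (hmem.integrable one_le_two)
    have EΓ_eq : dform μX (GammaX η ξ) g = ∫ θ, varF (ξ θ) g ∂μΘ := by
      rw [← hgamma_eq, gΓ.2]; exact integral_congr_ae hΓθ
    have EΓ_int : Integrable (fun θ => varF (ξ θ) g) μΘ := gΓ.1.congr hΓθ
    have EΦ_eq : dform μX (PhiX η Pk) g
        = ∫ θ, dform (ξ θ) (fun x => Pk (θ, x)) g ∂μΘ := by
      rw [← hphi_eq]; exact gΦ.2
    have hmemθ : ∀ᵐ θ ∂μΘ, MemLp g 2 (ξ θ) :=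
      haeθ2.mono fun θ h => (memLp_two_iff_integrable_sq hgm.aestronglyMeasurable).2 h
    have hfacts : ∀ᵐ θ ∂μΘ, 0 ≤ dform (ξ θ) (fun x => Pk (θ, x)) g ∧
        dform (ξ θ) (fun x => Pk (θ, x)) g ≤ 2 * varF (ξ θ) g ∧
        gapR (ξ θ) (fun x => Pk (θ, x)) * varF (ξ θ) g
          ≤ dform (ξ θ) (fun x => Pk (θ, x)) g ∧
        0 ≤ varF (ξ θ) g := by
      filter_upwards [hmemθ] with θ h
      have hsθ := hs_theta hrev θ
      have hq := dform_core' hsθ h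
      have hg' := gapR_mul_var_le hsθ h
      rw [kth_eq] at hq hg'
      exact ⟨hq.1, hq.2, hg', varF_nonneg h⟩
    have Φnn : 0 ≤ dform μX (PhiX η Pk) g := by
      rw [EΦ_eq]; exact integral_nonneg_of_ae (hfacts.mono fun θ h => h.1)
    have Γnn : 0 ≤ dform μX (GammaX η ξ) g := by
      rw [EΓ_eq]; exact integral_nonneg_of_ae (hfacts.mono fun θ h => h.2.2.2)
    refine ⟨⟨by rw [tΦ]; exact Φnn, by rw [tΓ]; exact Γnn⟩, ?_, ?_⟩
    · rw [tΦ, tΓ, EΦ_eq, EΓ_eq, ← integral_const_mul]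
      exact integral_mono_ae gΦ.1 (EΓ_int.const_mul 2) (hfacts.mono fun θ h => h.2.1)
    · rw [tΦ, tΓ]
      rcases eq_or_lt_of_le Γnn with h0 | hpos
      · rw [← h0, mul_zero]; exact Φnn
      · have hvar_fg : ∫ θ, varF (ξ θ) f ∂μΘ = ∫ θ, varF (ξ θ) g ∂μΘ :=
          integral_congr_ae ((slice_ae h1 h2 hfg).mono fun θ h => varF_congr_ae h)
        have hng_fg : ∫ θ, varF (ξ θ) f * gapR (ξ θ) (fun x => Pk (θ, x)) ∂μΘ
            = ∫ θ, varF (ξ θ) g * gapR (ξ θ) (fun x => Pk (θ, x)) ∂μΘ :=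
          integral_congr_ae ((slice_ae h1 h2 hfg).mono fun θ h => by
            dsimp only; rw [varF_congr_ae h])
        have hEg : 0 < ∫ θ, varF (ξ θ) g ∂μΘ := by rw [← EΓ_eq]; exact hpos
        have hmem : (∫ θ, varF (ξ θ) g * gapR (ξ θ) (fun x => Pk (θ, x)) ∂μΘ) /
            (∫ θ, varF (ξ θ) g ∂μΘ) ∈ Sρ := by
          rw [hSρ]
          exact ⟨f, hf, by rw [hvar_fg]; exact hEg, by rw [hvar_fg, hng_fg]⟩
        have hle := csInf_le hbddρ hmem
        have hnum_le : ∫ θ, varF (ξ θ) g * gapR (ξ θ) (fun x => Pk (θ, x)) ∂μΘ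
            ≤ ∫ θ, dform (ξ θ) (fun x => Pk (θ, x)) g ∂μΘ := by
          by_cases hI : Integrable
              (fun θ => varF (ξ θ) g * gapR (ξ θ) (fun x => Pk (θ, x))) μΘ
          · exact integral_mono_ae hI gΦ.1 (hfacts.mono fun θ h => by
              dsimp only; rw [mul_comm]; exact h.2.2.1)
          · rw [integral_undef hI]
            exact integral_nonneg_of_ae (hfacts.mono fun θ h => h.1)
        calc mwgRho π ξ Pk * dform μX (GammaX η ξ) g
            ≤ (∫ θ, varF (ξ θ) g * gapR (ξ θ) (fun x => Pk (θ, x)) ∂μΘ) /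
              (∫ θ, varF (ξ θ) g ∂μΘ) * dform μX (GammaX η ξ) g := by
              refine mul_le_mul_of_nonneg_right ?_ Γnn
              rw [hρ]; exact hle
          _ = ∫ θ, varF (ξ θ) g * gapR (ξ θ) (fun x => Pk (θ, x)) ∂μΘ := by
              rw [EΓ_eq, div_mul_cancel₀ _ hEg.ne']
          _ ≤ ∫ θ, dform (ξ θ) (fun x => Pk (θ, x)) g ∂μΘ := hnum_le
          _ = dform μX (PhiX η Pk) g := EΦ_eq.symm
  constructor
  · exact fun f hf => (key f hf).2
  · set SΦ := {r : ℝ | ∃ f : X → ℝ, MemLp f 2 μX ∧ 0 < varF μX f ∧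
        r = dform μX (PhiX η Pk) f / varF μX f} with hSΦ
    set SΓ := {r : ℝ | ∃ f : X → ℝ, MemLp f 2 μX ∧ 0 < varF μX f ∧
        r = dform μX (GammaX η ξ) f / varF μX f} with hSΓ
    have hgapΦ : gapR μX (PhiX η Pk) = sInf SΦ := rfl
    have hgapΓ : gapR μX (GammaX η ξ) = sInf SΓ := rfl
    have hbddΦ : BddBelow SΦ := ⟨0, by
      rintro r ⟨f, hf, hv, rfl⟩
      exact div_nonneg (key f hf).1.1 hv.le⟩
    have hbddΓ : BddBelow SΓ := ⟨0, by
      rintro r ⟨f, hf, hv, rfl⟩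
      exact div_nonneg (key f hf).1.2 hv.le⟩
    by_cases hne : SΓ.Nonempty
    · have hneΦ : SΦ.Nonempty := by
        obtain ⟨r, f, hf, hv, _⟩ := hne
        exact ⟨_, f, hf, hv, rfl⟩
      constructor
      · rw [hgapΦ, hgapΓ]
        have hhalf : sInf SΦ / 2 ≤ sInf SΓ := by
          refine le_csInf hne ?_
          rintro r ⟨f, hf, hv, rfl⟩
          have hA := csInf_le hbddΦ
            (show dform μX (PhiX η Pk) f / varF μX f ∈ SΦ from ⟨f, hf, hv, rfl⟩)
          have hB := (key f hf).2.1
          have hC : dform μX (PhiX η Pk) f / varF μX f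
              ≤ 2 * dform μX (GammaX η ξ) f / varF μX f :=
            (div_le_div_iff_of_pos_right hv).2 hB
          rw [mul_div_assoc] at hC
          linarith
        linarith
      · rw [hgapΦ, hgapΓ]
        refine le_csInf hneΦ ?_
        rintro r ⟨f, hf, hv, rfl⟩
        have hB := (key f hf).2.2
        have hA : mwgRho π ξ Pk * sInf SΓ
            ≤ mwgRho π ξ Pk * (dform μX (GammaX η ξ) f / varF μX f) :=
          mul_le_mul_of_nonneg_left (csInf_le hbddΓ ⟨f, hf, hv, rfl⟩) hρnn
        have hC : mwgRho π ξ Pk * (dform μX (GammaX η ξ) f / varF μX f)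
            ≤ dform μX (PhiX η Pk) f / varF μX f := by
          rw [← mul_div_assoc]
          exact (div_le_div_iff_of_pos_right hv).2 hB
        linarith
    · have hneΦ : ¬ SΦ.Nonempty := by
        rintro ⟨r, f, hf, hv, _⟩
        exact hne ⟨_, f, hf, hv, rfl⟩
      rw [hgapΦ, hgapΓ, Set.not_nonempty_iff_eq_empty.1 hne,
        Set.not_nonempty_iff_eq_empty.1 hneΦ, Real.sInf_empty]
      norm_num
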